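/- The center of the group G = ⟨Θ, Ψ | Θ²Ψ = ΨΘ², (ΘΨ)³ = Θ⁴⟩ is the subgroup generated by Θ², and it is infinite cyclic. -/

import Mathlib

/-- Generators of the group `G = ⟨Θ, Ψ | Θ²Ψ = ΨΘ², (ΘΨ)³ = Θ⁴⟩`. -/
inductive GTilde.Gen | theta | psi
  deriving DecidableEq

namespace GTilde

open FreeGroup

/-- The relations of `G`: `Θ²Ψ(Θ²)⁻¹Ψ⁻¹` and `(ΘΨ)³(Θ⁴)⁻¹`. -/
def rels : Set (FreeGroup Gen) :=
  { (of Gen.theta) ^ 2 * of Gen.psi * ((of Gen.theta) ^ 2)⁻¹ * (of Gen.psi)⁻¹,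
    (of Gen.theta * of Gen.psi) ^ 3 * ((of Gen.theta) ^ 4)⁻¹ }

/-- The group `G = ⟨Θ, Ψ | Θ²Ψ = ΨΘ², (ΘΨ)³ = Θ⁴⟩`. -/
abbrev G := PresentedGroup rels

/-- The generator `Θ` of `G`. -/
def Θ : G := PresentedGroup.of Gen.theta

end GTilde

open GTilde

namespace StmtAux

open Monoid Monoid.CoprodI

/-- The generator `Ψ` of `G`. -/
def Ψ' : G := PresentedGroup.of Gen.psi

lemma mk_rels_eq_one {r : FreeGroup Gen} (hr : r ∈ rels) : PresentedGroup.mk rels r = 1 := by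
  exact (QuotientGroup.eq_one_iff r).mpr (Subgroup.subset_normalClosure hr)

lemma rel1 : Θ ^ 2 * Ψ' = Ψ' * Θ ^ 2 := by
  have h : PresentedGroup.mk rels
      ((FreeGroup.of Gen.theta) ^ 2 * FreeGroup.of Gen.psi *
        ((FreeGroup.of Gen.theta) ^ 2)⁻¹ * (FreeGroup.of Gen.psi)⁻¹) = 1 :=
    mk_rels_eq_one (Set.mem_insert _ _)
  have h' : Θ ^ 2 * Ψ' * (Θ ^ 2)⁻¹ * Ψ'⁻¹ = 1 := by
    simpa [Θ, Ψ', PresentedGroup.of, map_mul, map_pow, map_inv] using h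
  calc Θ ^ 2 * Ψ' = (Θ ^ 2 * Ψ' * (Θ ^ 2)⁻¹ * Ψ'⁻¹) * (Ψ' * Θ ^ 2) := by group
  _ = Ψ' * Θ ^ 2 := by rw [h', one_mul]

lemma rel2 : (Θ * Ψ') ^ 3 = Θ ^ 4 := by
  have h : PresentedGroup.mk rels
      ((FreeGroup.of Gen.theta * FreeGroup.of Gen.psi) ^ 3 *
        ((FreeGroup.of Gen.theta) ^ 4)⁻¹) = 1 :=
    mk_rels_eq_one (Set.mem_insert_of_mem _ rfl)
  have h' : (Θ * Ψ') ^ 3 * (Θ ^ 4)⁻¹ = 1 := by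
    simpa [Θ, Ψ', PresentedGroup.of, map_mul, map_pow, map_inv] using h
  rwa [mul_inv_eq_one] at h'

lemma theta_sq_mem_center : Θ ^ 2 ∈ Subgroup.center G := by
  rw [Subgroup.mem_center_iff]
  intro g
  have : g ∈ Subgroup.centralizer {Θ ^ 2} := by
    refine PresentedGroup.generated_by rels _ ?_ g
    intro j
    rw [Subgroup.mem_centralizer_iff]
    rintro x ⟨rfl⟩
    cases j with
    | theta => exact ((Commute.refl Θ).pow_left 2).eq
    | psi => exact rel1
  exact (Subgroup.mem_centralizer_iff.mp this _ rfl).symm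

/-- The family `C2`, `C3` indexed by `Bool`. -/
abbrev F : Bool → Type
  | false => Multiplicative (ZMod 2)
  | true => Multiplicative (ZMod 3)

instance FGroup : ∀ b, Group (F b)
  | false => inferInstanceAs (Group (Multiplicative (ZMod 2)))
  | true => inferInstanceAs (Group (Multiplicative (ZMod 3)))

instance FDec : ∀ b, DecidableEq (F b)
  | false => inferInstanceAs (DecidableEq (Multiplicative (ZMod 2)))
  | true => inferInstanceAs (DecidableEq (Multiplicative (ZMod 3)))

/-- The free product `C2 * C3`. -/
abbrev Q := Monoid.CoprodI F

def a2 : F false := Multiplicative.ofAdd 1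
def a3 : F true := Multiplicative.ofAdd 1

/-- If two nonempty reduced words have the same product, their head indices agree. -/
lemma head_idx_eq {i₁ j₁ i₂ j₂ : Bool} (w₁ : NeWord F i₁ j₁) (w₂ : NeWord F i₂ j₂)
    (h : w₁.prod = w₂.prod) : i₁ = i₂ := by
  have hw : w₁.toWord = w₂.toWord := (Word.equiv (M := F)).symm.injective h
  have h1 : w₁.toList = w₂.toList := congrArg Word.toList hw
  have e1 := w₁.toList_head?
  have e2 := w₂.toList_head?
  rw [h1, e2] at e1
  have h2 : (⟨i₂, w₂.head⟩ : Σ i, F i) = ⟨i₁, w₁.head⟩ := Option.some.inj e1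
  exact (congrArg Sigma.fst h2).symm

/-- Central elements with head index equal to last index are impossible. -/
lemma key_diag {z : Q} (hz : ∀ q : Q, q * z = z * q) {i : Bool} (w : NeWord F i i)
    (hw : w.prod = z) : False := by
  have hgex : ∃ g : F (!i), g ≠ 1 := by
    cases i
    · exact ⟨a3, by decide⟩
    · exact ⟨a2, by decide⟩
  obtain ⟨g, hg⟩ := hgex
  have hne : (!i) ≠ i := by cases i <;> simp
  set w₁ : NeWord F (!i) i := NeWord.append (NeWord.singleton g hg) hne w with hw₁
  set w₂ : NeWord F i (!i) := NeWord.append w hne.symm (NeWord.singleton g hg) with hw₂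
  have hp : w₁.prod = w₂.prod := by
    rw [hw₁, hw₂]
    simp only [NeWord.append_prod, NeWord.prod_singleton, hw]
    exact hz (CoprodI.of g)
  exact hne (head_idx_eq w₁ w₂ hp)

/-- Central elements with distinct head/last index are impossible, provided the factor of the
last index has a nontrivial element not cancelling it. -/
lemma key_offdiag {z : Q} (hz : ∀ q : Q, q * z = z * q) {i j : Bool} (hij : i ≠ j)
    (w : NeWord F i j) (hw : w.prod = z) (g : F j) (hg1 : g ≠ 1)
    (hg2 : g⁻¹ * w.last⁻¹ ≠ 1) : False := by
  set w₁ : NeWord F j j := NeWord.append (NeWord.singleton g hg1) (Ne.symm hij) w with hw₁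
  have hp1 : w₁.prod = CoprodI.of g * z := by
    rw [hw₁]; simp only [NeWord.append_prod, NeWord.prod_singleton, hw]
  have hhead : g⁻¹ * w.inv.head ≠ 1 := by rwa [NeWord.inv_head]
  set w₂ : NeWord F j i := NeWord.mulHead w.inv g⁻¹ hhead with hw₂
  have hp2 : w₂.prod = CoprodI.of g⁻¹ * z⁻¹ := by
    rw [hw₂, NeWord.mulHead_prod, NeWord.inv_prod, hw]
  have hp : w₂.inv.prod = w₁.prod := by
    rw [NeWord.inv_prod, hp2, hp1, map_inv, mul_inv_rev, inv_inv, inv_inv]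
    exact (hz (CoprodI.of g)).symm
  exact hij (head_idx_eq w₂.inv w₁ hp)

/-- The free product `C2 * C3` has trivial center. -/
lemma center_triv (z : Q) (hz : ∀ q : Q, q * z = z * q) : z = 1 := by
  by_contra h1
  have hne : Word.equiv z ≠ Word.empty := by
    intro he
    apply h1
    have := congrArg (Word.equiv (M := F)).symm he
    rwa [Equiv.symm_apply_apply, show (Word.equiv (M := F)).symm Word.empty = 1 from rfl] at this
  obtain ⟨i, j, w, hw⟩ := NeWord.of_word (Word.equiv z) hne
  have hwp : w.prod = z := by
    rw [NeWord.prod, hw]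
    exact (Word.equiv (M := F)).symm_apply_apply z
  have hzinv : ∀ q : Q, q * z⁻¹ = z⁻¹ * q := by
    intro q
    have h := congrArg Inv.inv (hz q⁻¹)
    simpa [mul_inv_rev] using h.symm
  cases i <;> cases j
  · exact key_diag hz w hwp
  · -- i = false, j = true : last letter lies in C3
    have hgex : ∃ g : F true, g ≠ 1 ∧ g⁻¹ * w.last⁻¹ ≠ 1 := by
      have : ∀ t : Multiplicative (ZMod 3),
          ∃ g : Multiplicative (ZMod 3), g ≠ 1 ∧ g⁻¹ * t⁻¹ ≠ 1 := by decide
      exact this w.last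
    obtain ⟨g, hg1, hg2⟩ := hgex
    exact key_offdiag hz (by simp) w hwp g hg1 hg2
  · -- i = true, j = false : apply the previous argument to `z⁻¹`
    have hgex : ∃ g : F true, g ≠ 1 ∧ g⁻¹ * w.inv.last⁻¹ ≠ 1 := by
      have : ∀ t : Multiplicative (ZMod 3),
          ∃ g : Multiplicative (ZMod 3), g ≠ 1 ∧ g⁻¹ * t⁻¹ ≠ 1 := by decide
      exact this w.inv.last
    obtain ⟨g, hg1, hg2⟩ := hgex
    exact key_offdiag hzinv (by simp) w.inv (by rw [NeWord.inv_prod, hwp]) g hg1 hg2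
  · exact key_diag hz w hwp

lemma a2_sq : a2 * a2 = 1 := by decide
lemma a3_cube : a3 * a3 * a3 = 1 := by decide

lemma of_a2_sq : (CoprodI.of a2 : Q) ^ 2 = 1 := by
  rw [pow_two, ← map_mul, a2_sq, map_one]

lemma of_a3_cube : (CoprodI.of a3 : Q) ^ 3 = 1 := by
  rw [pow_succ, pow_two, ← map_mul, ← map_mul, a3_cube, map_one]

def fQ : Gen → Q
  | Gen.theta => CoprodI.of a2
  | Gen.psi => (CoprodI.of a2)⁻¹ * CoprodI.of a3

lemma fQ_rels : ∀ r ∈ rels, FreeGroup.lift fQ r = 1 := by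
  rintro r (rfl | rfl) <;>
    simp only [map_mul, map_pow, map_inv, FreeGroup.lift_apply_of, fQ]
  · have h := of_a2_sq
    rw [h]
    group
  · have h2 := of_a2_sq
    have h3 := of_a3_cube
    have : (CoprodI.of a2 * ((CoprodI.of a2)⁻¹ * CoprodI.of a3)) = CoprodI.of a3 := by group
    rw [this, h3, show ((CoprodI.of a2 : Q) ^ 4) = ((CoprodI.of a2) ^ 2) ^ 2 by group, h2]
    group

/-- The projection `G → C2 * C3`. -/
def φ : G →* Q := PresentedGroup.toGroup fQ_rels

lemma φ_theta : φ Θ = CoprodI.of a2 := PresentedGroup.toGroup.of fQ_rels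

lemma φ_psi : φ Ψ' = (CoprodI.of a2)⁻¹ * CoprodI.of a3 := PresentedGroup.toGroup.of fQ_rels

lemma φ_surj : Function.Surjective φ := by
  intro q
  induction q using CoprodI.induction_on with
  | one => exact ⟨1, map_one φ⟩
  | of i m =>
    cases i
    · have hk : a2 ^ (Multiplicative.toAdd m).val = m := by revert m; decide
      exact ⟨Θ ^ (Multiplicative.toAdd m).val, by rw [map_pow, φ_theta, ← map_pow, hk]⟩
    · have hk : a3 ^ (Multiplicative.toAdd m).val = m := by revert m; decide
      refine ⟨(Θ * Ψ') ^ (Multiplicative.toAdd m).val, ?_⟩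
      have : φ (Θ * Ψ') = CoprodI.of a3 := by
        rw [map_mul, φ_theta, φ_psi]; group
      rw [map_pow, this, ← map_pow, hk]
  | mul x y hx hy =>
    obtain ⟨gx, rfl⟩ := hx
    obtain ⟨gy, rfl⟩ := hy
    exact ⟨gx * gy, map_mul φ gx gy⟩

/-- The subgroup generated by `Θ²`. -/
abbrev H : Subgroup G := Subgroup.zpowers (Θ ^ 2)

instance H_normal : (Subgroup.zpowers ((Θ : G) ^ 2)).Normal := by
  constructor
  intro n hn g
  obtain ⟨k, rfl⟩ := hn
  have hc : (Θ ^ 2) ^ k ∈ Subgroup.center G := Subgroup.zpow_mem _ theta_sq_mem_center k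
  rw [Subgroup.mem_center_iff] at hc
  show g * (Θ ^ 2) ^ k * g⁻¹ ∈ H
  rw [hc g, mul_assoc, mul_inv_cancel, mul_one]
  exact Subgroup.zpow_mem _ (Subgroup.mem_zpowers _) k

lemma mkΘ_sq : ((Θ : G) : G ⧸ H) ^ 2 = 1 := by
  rw [← QuotientGroup.mk_pow, QuotientGroup.eq_one_iff]
  exact Subgroup.mem_zpowers _

lemma mkΘΨ_cube : (((Θ * Ψ' : G)) : G ⧸ H) ^ 3 = 1 := by
  rw [← QuotientGroup.mk_pow, rel2, QuotientGroup.eq_one_iff]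
  have : (Θ : G) ^ 4 = (Θ ^ 2) ^ 2 := by group
  rw [this]
  exact Subgroup.zpow_mem _ (Subgroup.mem_zpowers _) (2 : ℕ)

/-- Lift `C2 → G ⧸ H` sending the generator to the class of `Θ`. -/
noncomputable def χ0 : F false →* G ⧸ H :=
  AddMonoidHom.toMultiplicativeLeft
    (ZMod.lift 2 ⟨zmultiplesHom (Additive (G ⧸ H)) (Additive.ofMul ((Θ : G) : G ⧸ H)), by
      simp only [zmultiplesHom_apply]
      have h2 : (((Θ : G) : G ⧸ H)) ^ ((2 : ℕ) : ℤ) = 1 := by rw [zpow_natCast, mkΘ_sq]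
      rw [← ofMul_zpow, h2]; rfl⟩)

noncomputable def χ1 : F true →* G ⧸ H :=
  AddMonoidHom.toMultiplicativeLeft
    (ZMod.lift 3 ⟨zmultiplesHom (Additive (G ⧸ H)) (Additive.ofMul (((Θ * Ψ' : G)) : G ⧸ H)), by
      simp only [zmultiplesHom_apply]
      have h2 : ((((Θ * Ψ' : G))) : G ⧸ H) ^ ((3 : ℕ) : ℤ) = 1 := by rw [zpow_natCast, mkΘΨ_cube]
      rw [← ofMul_zpow, h2]; rfl⟩)

noncomputable def fχ : ∀ b, F b →* G ⧸ H
  | false => χ0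
  | true => χ1

noncomputable def χ : Q →* G ⧸ H := CoprodI.lift fχ

lemma toMult_apply {α β : Type*} [AddZeroClass α] [MulOneClass β] (f : α →+ Additive β)
    (a : Multiplicative α) :
    AddMonoidHom.toMultiplicativeLeft f a = Additive.toMul (f (Multiplicative.toAdd a)) := rfl

lemma χ0_a2 : χ0 a2 = ((Θ : G) : G ⧸ H) := by
  have h1 : (Multiplicative.toAdd a2 : ZMod 2) = ((1 : ℤ) : ZMod 2) := by decide
  rw [χ0, toMult_apply, h1, ZMod.lift_coe]
  simp [zmultiplesHom_apply]

lemma χ1_a3 : χ1 a3 = (((Θ * Ψ' : G)) : G ⧸ H) := by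
  have h1 : (Multiplicative.toAdd a3 : ZMod 3) = ((1 : ℤ) : ZMod 3) := by decide
  rw [χ1, toMult_apply, h1, ZMod.lift_coe]
  simp [zmultiplesHom_apply]

lemma χ_comp_φ : χ.comp φ = QuotientGroup.mk' H := by
  apply PresentedGroup.ext
  intro x
  cases x with
  | theta =>
    show χ (φ Θ) = _
    rw [φ_theta]
    show CoprodI.lift fχ (CoprodI.of a2) = _
    rw [CoprodI.lift_of]
    exact χ0_a2
  | psi =>
    show χ (φ Ψ') = _
    rw [φ_psi, map_mul, map_inv]
    show (CoprodI.lift fχ (CoprodI.of a2))⁻¹ * CoprodI.lift fχ (CoprodI.of a3) = _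
    rw [CoprodI.lift_of, CoprodI.lift_of]
    show (χ0 a2)⁻¹ * χ1 a3 = _
    rw [χ0_a2, χ1_a3]
    have : ((Θ : G) : G ⧸ H)⁻¹ * (((Θ * Ψ' : G)) : G ⧸ H) = ((Ψ' : G) : G ⧸ H) := by
      rw [← QuotientGroup.mk_inv, ← QuotientGroup.mk_mul]
      congr 1
      group
    exact this

/-- Abelianization map for the infinite-order statement. -/
def fab : Gen → Multiplicative ℤ
  | Gen.theta => Multiplicative.ofAdd 3
  | Gen.psi => Multiplicative.ofAdd 1

lemma fab_rels : ∀ r ∈ rels, FreeGroup.lift fab r = 1 := by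
  rintro r (rfl | rfl) <;>
    simp only [map_mul, map_pow, map_inv, FreeGroup.lift_apply_of, fab] <;> decide

def ab : G →* Multiplicative ℤ := PresentedGroup.toGroup fab_rels

lemma ab_theta : ab Θ = Multiplicative.ofAdd 3 := PresentedGroup.toGroup.of fab_rels

end StmtAux

open StmtAux

/-- The center of `G = ⟨Θ, Ψ | Θ²Ψ = ΨΘ², (ΘΨ)³ = Θ⁴⟩` is the subgroup generated by `Θ²`,
and it is infinite cyclic (`Θ²` has infinite order). -/
theorem stmt1 :
    Subgroup.center G = Subgroup.zpowers (Θ ^ 2) ∧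
    ∀ n : ℤ, (Θ ^ 2) ^ n = 1 → n = 0 := by
  constructor
  · apply le_antisymm
    · intro z hz
      rw [Subgroup.mem_center_iff] at hz
      have hφz : φ z = 1 := by
        apply center_triv
        intro q
        obtain ⟨g, rfl⟩ := φ_surj q
        rw [← map_mul, ← map_mul, hz g]
      have : (QuotientGroup.mk' H) z = 1 := by
        rw [← χ_comp_φ]
        show χ (φ z) = 1
        rw [hφz, map_one]
      exact (QuotientGroup.eq_one_iff z).mp this
    · rw [Subgroup.zpowers_le]
      exact theta_sq_mem_center
  · intro n hn
    have h := congrArg ab hn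
    rw [map_zpow, map_pow, ab_theta, map_one] at h
    have h2 := congrArg Multiplicative.toAdd h
    simp at h2
    omega
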